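/- The Delannoy numbers D_{n1,n2} = ∑_{k=0}^{min(n1,n2)} C(n1,k)·C(n1+n2−k, n1) satisfy, for every prime p, all m1, m2 ≥ 1 and r ≥ 1: D_{m1·p^r, m2·p^r} ≡ D_{m1·p^{r-1}, m2·p^{r-1}} (mod p^r). -/

import Mathlib

open PowerSeries Finset

namespace DelannoyAux

noncomputable section

variable {R : Type*} [CommRing R]

/-- Expansion by `p`: substitute `X ↦ X^p` in a power series. -/
def pexpand (p : ℕ) (f : R⟦X⟧) : R⟦X⟧ :=
  PowerSeries.mk fun n => if p ∣ n then PowerSeries.coeff (n / p) f else 0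

@[simp] lemma coeff_pexpand (p n : ℕ) (f : R⟦X⟧) :
    PowerSeries.coeff n (pexpand p f) = if p ∣ n then PowerSeries.coeff (n / p) f else 0 :=
  coeff_mk _ _

lemma sum_expand {p : ℕ} (hp : 0 < p) (m : ℕ) (h : ℕ → R) :
    ∑ i ∈ range (p * m + 1), (if p ∣ i then h (i / p) else 0) = ∑ j ∈ range (m + 1), h j := by
  have himg : (range (m + 1)).image (fun j => p * j) ⊆ range (p * m + 1) := by
    intro i hi
    simp only [mem_image, mem_range] at hi ⊢
    obtain ⟨j, hj, rfl⟩ := hi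
    exact Nat.lt_succ_of_le (Nat.mul_le_mul_left _ (Nat.lt_succ_iff.mp hj))
  rw [← Finset.sum_subset himg ?van]
  · rw [Finset.sum_image (fun a _ b _ hab => Nat.eq_of_mul_eq_mul_left hp hab)]
    refine Finset.sum_congr rfl fun j _ => ?_
    rw [if_pos (dvd_mul_right _ _), Nat.mul_div_cancel_left _ hp]
  · intro i hi hni
    rw [if_neg]
    intro hdvd
    obtain ⟨j, rfl⟩ := hdvd
    exact hni (Finset.mem_image.mpr ⟨j, Finset.mem_range.mpr
      (Nat.lt_succ_of_le (Nat.le_of_mul_le_mul_left (Nat.lt_succ_iff.mp (mem_range.mp hi)) hp)),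
      rfl⟩)

lemma pexpand_mul {p : ℕ} (hp : 0 < p) (f g : R⟦X⟧) :
    pexpand p (f * g) = pexpand p f * pexpand p g := by
  ext n
  rw [coeff_mul, Finset.Nat.sum_antidiagonal_eq_sum_range_succ_mk]
  simp only [coeff_pexpand]
  by_cases hn : p ∣ n
  · obtain ⟨m, rfl⟩ := hn
    rw [if_pos (dvd_mul_right _ _), Nat.mul_div_cancel_left _ hp, coeff_mul,
      Finset.Nat.sum_antidiagonal_eq_sum_range_succ_mk]
    rw [← sum_expand hp m (fun j => (PowerSeries.coeff j f) * (PowerSeries.coeff (m - j) g))]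
    refine Finset.sum_congr rfl fun i hi => ?_
    by_cases hpi : p ∣ i
    · obtain ⟨j, rfl⟩ := hpi
      rw [if_pos (dvd_mul_right _ _), ← Nat.mul_sub, if_pos (dvd_mul_right _ _),
        Nat.mul_div_cancel_left _ hp, Nat.mul_div_cancel_left _ hp,
        if_pos (dvd_mul_right p (m - j))]
    · rw [if_neg hpi, if_neg hpi, zero_mul]
  · rw [if_neg hn]
    refine (Finset.sum_eq_zero fun i hi => ?_).symm
    by_cases hpi : p ∣ i
    · have hni : ¬ p ∣ (n - i) := fun hd => hn (by
        have hi' : i ≤ n := Nat.lt_succ_iff.mp (mem_range.mp hi)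
        have := Nat.dvd_add hpi hd
        rwa [Nat.add_sub_cancel' hi'] at this)
      rw [if_pos hpi, if_neg hni, mul_zero]
    · rw [if_neg hpi, zero_mul]

lemma pexpand_one {p : ℕ} (hp : 0 < p) : pexpand p (1 : R⟦X⟧) = 1 := by
  ext n
  simp only [coeff_pexpand, PowerSeries.coeff_one]
  by_cases hn : n = 0
  · subst hn; simp
  · rw [if_neg hn]
    by_cases hpn : p ∣ n
    · rw [if_pos hpn, if_neg fun h0 => hn (by
        obtain ⟨k, rfl⟩ := hpn
        rw [Nat.mul_div_cancel_left _ hp] at h0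
        simp [h0])]
    · rw [if_neg hpn]

lemma pexpand_pow {p : ℕ} (hp : 0 < p) (f : R⟦X⟧) (k : ℕ) :
    pexpand p (f ^ k) = (pexpand p f) ^ k := by
  induction k with
  | zero => simpa using pexpand_one hp
  | succ k ih => rw [pow_succ, pow_succ, pexpand_mul hp, ih]

lemma pexpand_one_add_X {p : ℕ} (hp : 0 < p) :
    pexpand p (1 + X : R⟦X⟧) = 1 + X ^ p := by
  ext n
  rw [coeff_pexpand]
  simp only [map_add, PowerSeries.coeff_one, PowerSeries.coeff_X, PowerSeries.coeff_X_pow]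
  by_cases h0 : n = 0
  · subst h0; simp [hp.ne, hp.ne']
  by_cases hP : n = p
  · subst hP; simp [Nat.div_self hp, hp.ne']
  rw [if_neg h0, if_neg hP, add_zero]
  by_cases hpn : p ∣ n
  · obtain ⟨k, rfl⟩ := hpn
    rw [if_pos (dvd_mul_right _ _), Nat.mul_div_cancel_left _ hp]
    have h1 : ¬ k = 0 := fun h => h0 (by simp [h])
    have h2 : ¬ k = 1 := fun h => hP (by simp [h])
    rw [if_neg h1, if_neg h2, add_zero]
  · rw [if_neg hpn]

lemma pexpand_one_sub_X {p : ℕ} (hp : 0 < p) :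
    pexpand p (1 - X : R⟦X⟧) = 1 - X ^ p := by
  ext n
  rw [coeff_pexpand]
  simp only [map_sub, PowerSeries.coeff_one, PowerSeries.coeff_X, PowerSeries.coeff_X_pow]
  by_cases h0 : n = 0
  · subst h0; simp [hp.ne, hp.ne']
  by_cases hP : n = p
  · subst hP; simp [Nat.div_self hp, hp.ne']
  rw [if_neg h0, if_neg hP, sub_zero]
  by_cases hpn : p ∣ n
  · obtain ⟨k, rfl⟩ := hpn
    rw [if_pos (dvd_mul_right _ _), Nat.mul_div_cancel_left _ hp]
    have h1 : ¬ k = 0 := fun h => h0 (by simp [h])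
    have h2 : ¬ k = 1 := fun h => hP (by simp [h])
    rw [if_neg h1, if_neg h2, sub_zero]
  · rw [if_neg hpn]

variable {R : Type*} [CommRing R]


lemma coeff_one_add_X_pow' (a k : ℕ) :
    PowerSeries.coeff k ((1 + X) ^ a) = (a.choose k : R) := by
  have : ((1 + X : R⟦X⟧) ^ a) = (((1 + Polynomial.X : Polynomial R) ^ a : Polynomial R) : R⟦X⟧) := by
    push_cast
    norm_cast
  rw [this, Polynomial.coeff_coe, Polynomial.coeff_one_add_X_pow]

lemma coeff_D (a n : ℕ) :
    PowerSeries.coeff n ((1 + X) ^ a * (invOneSubPow R (a + 1)).val) =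
      ∑ k ∈ range (min a n + 1), (a.choose k : R) * ((a + n - k).choose a : R) := by
  rw [invOneSubPow_val_succ_eq_mk_add_choose, coeff_mul,
    Finset.Nat.sum_antidiagonal_eq_sum_range_succ_mk]
  simp only [coeff_mk, coeff_one_add_X_pow']
  rw [eq_comm]
  refine Finset.sum_subset (Finset.range_subset_range.mpr
    (by omega : min a n + 1 ≤ n + 1)) (fun i hi hni => ?_) |>.trans ?_
  · have hia : a < i := by
      simp only [mem_range] at hi hni; omega
    rw [Nat.choose_eq_zero_of_lt hia]
    simp
  · refine Finset.sum_congr rfl fun i hi => ?_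
    have hin : i ≤ n := Nat.lt_succ_iff.mp (mem_range.mp hi)
    rw [Nat.add_sub_assoc hin]


lemma dvd_of_dvd_coeff (p : ℕ) (f : ℤ⟦X⟧) (h : ∀ n, (p : ℤ) ∣ PowerSeries.coeff n f) :
    (p : ℤ⟦X⟧) ∣ f := by
  refine ⟨PowerSeries.mk fun n => PowerSeries.coeff n f / p, ?_⟩
  ext n
  have hc : ((p : ℤ⟦X⟧)) = PowerSeries.C (p : ℤ) := rfl
  rw [hc, coeff_C_mul, coeff_mk, Int.mul_ediv_cancel' (h n)]

lemma coeff_one_add_X_pow'' (a k : ℕ) :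
    PowerSeries.coeff k ((1 + X) ^ a) = (a.choose k : ℤ) := by
  have : ((1 + X : ℤ⟦X⟧) ^ a) = (((1 + Polynomial.X : Polynomial ℤ) ^ a : Polynomial ℤ) : ℤ⟦X⟧) := by
    push_cast
    norm_cast
  rw [this, Polynomial.coeff_coe, Polynomial.coeff_one_add_X_pow]

lemma frob_one_add_X (p : ℕ) (hp : p.Prime) :
    (p : ℤ⟦X⟧) ∣ (1 + X) ^ p - (1 + X ^ p) := by
  refine dvd_of_dvd_coeff p _ fun n => ?_
  rw [map_sub, map_add, coeff_one_add_X_pow'', PowerSeries.coeff_one, PowerSeries.coeff_X_pow]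
  by_cases h0 : n = 0
  · subst h0
    rw [if_pos rfl, if_neg (Ne.symm hp.ne_zero), Nat.choose_zero_right]
    simp
  by_cases hP : n = p
  · subst hP
    rw [if_neg h0, if_pos rfl, Nat.choose_self]
    simp
  rw [if_neg h0, if_neg hP, add_zero, sub_zero]
  by_cases hn : n < p
  · exact_mod_cast Int.natCast_dvd_natCast.mpr (hp.dvd_choose_self h0 hn)
  · rw [Nat.choose_eq_zero_of_lt (by omega)]
    simp

lemma rescale_neg_one_X : PowerSeries.rescale (-1 : ℤ) X = -X := by
  ext n
  rw [PowerSeries.coeff_rescale, map_neg]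
  rw [PowerSeries.coeff_X]
  by_cases h1 : n = 1
  · subst h1; simp
  · simp [PowerSeries.coeff_X, h1]

lemma frob_one_sub_X (p : ℕ) (hp : p.Prime) :
    (p : ℤ⟦X⟧) ∣ (1 - X) ^ p - (1 - X ^ p) := by
  rcases hp.eq_two_or_odd' with h2 | hodd
  · subst h2
    exact ⟨X ^ 2 - X, by push_cast; ring⟩
  · have h := map_dvd (PowerSeries.rescale (-1 : ℤ)) (frob_one_add_X p hp)
    simp only [map_natCast, map_sub, map_add, map_pow, map_one, rescale_neg_one_X] at h
    have hneg : (-X : ℤ⟦X⟧) ^ p = -(X ^ p) := by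
      rw [neg_pow, hodd.neg_one_pow]
      ring
    rw [hneg] at h
    simpa [sub_eq_add_neg] using h

lemma frob_lift (p : ℕ) (f g : ℤ⟦X⟧) (h : (p : ℤ⟦X⟧) ∣ f ^ p - g) (m s : ℕ) :
    ((p : ℤ⟦X⟧)) ^ (s + 1) ∣ f ^ (m * p ^ (s + 1)) - g ^ (m * p ^ s) := by
  have h1 : (p : ℤ⟦X⟧) ∣ (f ^ p) ^ m - g ^ m :=
    dvd_trans h (sub_dvd_pow_sub_pow _ _ m)
  have h2 := dvd_sub_pow_of_dvd_sub h1 s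
  have e1 : ((f ^ p) ^ m) ^ p ^ s = f ^ (m * p ^ (s + 1)) := by
    rw [← pow_mul, ← pow_mul]
    ring_nf
  have e2 : (g ^ m) ^ p ^ s = g ^ (m * p ^ s) := by rw [← pow_mul]
  rwa [e1, e2] at h2

lemma map_frob (p : ℕ) (hp : p.Prime) (m s : ℕ) (f g : ℤ⟦X⟧)
    (h : (p : ℤ⟦X⟧) ∣ f ^ p - g) :
    (PowerSeries.map (Int.castRingHom (ZMod (p ^ (s + 1)))) f) ^ (m * p ^ (s + 1)) =
      (PowerSeries.map (Int.castRingHom (ZMod (p ^ (s + 1)))) g) ^ (m * p ^ s) := by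
  obtain ⟨t, ht⟩ := frob_lift p f g h m s
  have := congrArg (PowerSeries.map (Int.castRingHom (ZMod (p ^ (s + 1))))) ht
  rw [map_sub, map_mul, map_pow, map_pow, map_pow, map_natCast] at this
  have hz : ((p : (ZMod (p ^ (s + 1)))⟦X⟧)) ^ (s + 1) = 0 := by
    have : ((p : (ZMod (p ^ (s + 1)))⟦X⟧)) ^ (s + 1) = ((p ^ (s + 1) : ℕ) : (ZMod (p ^ (s + 1)))⟦X⟧) := by
      push_cast
      ring
    rw [this]
    have : ((p ^ (s + 1) : ℕ) : ZMod (p ^ (s + 1))) = 0 := ZMod.natCast_self _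
    rw [show ((p ^ (s + 1) : ℕ) : (ZMod (p ^ (s + 1)))⟦X⟧) = PowerSeries.C ((p ^ (s + 1) : ℕ) : ZMod (p ^ (s + 1))) from rfl, this, map_zero]
  rw [hz, zero_mul, sub_eq_zero] at this
  exact this

section lemmas
variable {R : Type*} [CommRing R]

lemma one_sub_pow_mul_V (d : ℕ) :
    ((1 - X : R⟦X⟧) ^ d) * (invOneSubPow R d).val = 1 := by
  rw [← invOneSubPow_inv_eq_one_sub_pow]
  exact (invOneSubPow R d).inv_val

lemma V_succ_eq (c : ℕ) :
    ((invOneSubPow R (c + 1)).val : R⟦X⟧) = (invOneSubPow R c).val * (invOneSubPow R 1).val := by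
  have hB : ((invOneSubPow R c).val * (invOneSubPow R 1).val) * (1 - X) ^ (c + 1) = 1 := by
    calc ((invOneSubPow R c).val * (invOneSubPow R 1).val) * (1 - X) ^ (c + 1)
        = ((1 - X) ^ c * (invOneSubPow R c).val) * ((1 - X) ^ 1 * (invOneSubPow R 1).val) := by
          ring
      _ = 1 := by rw [one_sub_pow_mul_V, one_sub_pow_mul_V, mul_one]
  calc (invOneSubPow R (c + 1)).val
      = (invOneSubPow R (c + 1)).val * (((invOneSubPow R c).val * (invOneSubPow R 1).val) * (1 - X) ^ (c + 1)) := by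
        rw [hB, mul_one]
    _ = ((1 - X) ^ (c + 1) * (invOneSubPow R (c + 1)).val) * ((invOneSubPow R c).val * (invOneSubPow R 1).val) := by
        ring
    _ = (invOneSubPow R c).val * (invOneSubPow R 1).val := by
        rw [one_sub_pow_mul_V, one_mul]

end lemmas

end

end DelannoyAux

open DelannoyAux

/-- The Delannoy numbers. -/
def delannoy (n₁ n₂ : ℕ) : ℤ :=
  ∑ k ∈ Finset.range (min n₁ n₂ + 1), (n₁.choose k : ℤ) * ((n₁ + n₂ - k).choose n₁ : ℤ)

/-- The Delannoy numbers satisfy the Gauss congruences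
`D_{m₁p^r, m₂p^r} ≡ D_{m₁p^{r-1}, m₂p^{r-1}} (mod p^r)`. -/
theorem delannoy_gauss_congruence (p : ℕ) (hp : p.Prime) (m₁ m₂ r : ℕ)
    (hm₁ : 1 ≤ m₁) (hm₂ : 1 ≤ m₂) (hr : 1 ≤ r) :
    delannoy (m₁ * p ^ r) (m₂ * p ^ r) ≡
      delannoy (m₁ * p ^ (r - 1)) (m₂ * p ^ (r - 1)) [ZMOD (p : ℤ) ^ r] := by
  obtain ⟨s, rfl⟩ : ∃ s, r = s + 1 := ⟨r - 1, by omega⟩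
  have hs : s + 1 - 1 = s := rfl
  rw [hs]
  set R := ZMod (p ^ (s + 1)) with hR
  have hp0 : 0 < p := hp.pos
  set a := m₁ * p ^ (s + 1)
  set b := m₂ * p ^ (s + 1)
  set c := m₁ * p ^ s
  set d := m₂ * p ^ s
  -- reduce to an identity in `R`
  have hmod : ((p : ℤ)) ^ (s + 1) = ((p ^ (s + 1) : ℕ) : ℤ) := by push_cast; ring
  rw [hmod, ← ZMod.intCast_eq_intCast_iff]
  -- rewriting both delannoy values as coefficients
  have hcast : ∀ u v : ℕ, ((delannoy u v : ℤ) : R) =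
      PowerSeries.coeff v ((1 + X) ^ u * (invOneSubPow R (u + 1)).val) := by
    intro u v
    rw [coeff_D, delannoy]
    push_cast
    erw [Int.cast_sum]; simp only [Int.cast_mul, Int.cast_natCast]
  rw [hcast, hcast]
  -- Frobenius identities in R⟦X⟧
  have hmapadd : PowerSeries.map (Int.castRingHom R) (1 + X : ℤ⟦X⟧) = 1 + X := by
    rw [map_add, map_one, PowerSeries.map_X]
  have hmapaddp : PowerSeries.map (Int.castRingHom R) (1 + X ^ p : ℤ⟦X⟧) = 1 + X ^ p := by
    rw [map_add, map_one, map_pow, PowerSeries.map_X]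
  have hmapsub : PowerSeries.map (Int.castRingHom R) (1 - X : ℤ⟦X⟧) = 1 - X := by
    rw [map_sub, map_one, PowerSeries.map_X]
  have hmapsubp : PowerSeries.map (Int.castRingHom R) (1 - X ^ p : ℤ⟦X⟧) = 1 - X ^ p := by
    rw [map_sub, map_one, map_pow, PowerSeries.map_X]
  have h1 : (1 + X : R⟦X⟧) ^ a = (1 + X ^ p) ^ c := by
    have := map_frob p hp m₁ s (1 + X) (1 + X ^ p) (frob_one_add_X p hp)
    rwa [hmapadd, hmapaddp] at this
  have h2 : (1 - X : R⟦X⟧) ^ a = (1 - X ^ p) ^ c := by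
    have := map_frob p hp m₁ s (1 - X) (1 - X ^ p) (frob_one_sub_X p hp)
    rwa [hmapsub, hmapsubp] at this
  set Hc : R⟦X⟧ := (1 + X) ^ c * (invOneSubPow R c).val with hHc
  have key1 : (1 - X : R⟦X⟧) ^ c * Hc = (1 + X) ^ c := by
    calc (1 - X : R⟦X⟧) ^ c * Hc
        = (1 + X) ^ c * ((1 - X) ^ c * (invOneSubPow R c).val) := by rw [hHc]; ring
      _ = (1 + X) ^ c := by rw [one_sub_pow_mul_V, mul_one]
  have key2 : (1 - X ^ p : R⟦X⟧) ^ c * pexpand p Hc = (1 + X ^ p) ^ c := by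
    have := congrArg (pexpand p) key1
    rwa [pexpand_mul hp0, pexpand_pow hp0, pexpand_one_sub_X hp0, pexpand_pow hp0,
      pexpand_one_add_X hp0] at this
  set DA : R⟦X⟧ := (1 + X) ^ a * (invOneSubPow R (a + 1)).val with hDA
  have key3 : DA * (1 - X) = pexpand p Hc := by
    have e1 : DA * (1 - X) * (1 - X) ^ a = pexpand p Hc * (1 - X) ^ a := by
      calc DA * (1 - X) * (1 - X) ^ a
          = (1 + X) ^ a * ((invOneSubPow R (a + 1)).val * (1 - X) ^ (a + 1)) := by
            rw [hDA]; ring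
        _ = (1 + X) ^ a := by
            rw [mul_comm ((invOneSubPow R (a + 1)).val), one_sub_pow_mul_V, mul_one]
        _ = (1 + X ^ p) ^ c := h1
        _ = (1 - X ^ p) ^ c * pexpand p Hc := key2.symm
        _ = pexpand p Hc * (1 - X) ^ a := by rw [h2]; ring
    calc DA * (1 - X)
        = DA * (1 - X) * ((1 - X) ^ a * (invOneSubPow R a).val) := by
          rw [one_sub_pow_mul_V, mul_one]
      _ = (DA * (1 - X) * (1 - X) ^ a) * (invOneSubPow R a).val := by ring
      _ = (pexpand p Hc * (1 - X) ^ a) * (invOneSubPow R a).val := by rw [e1]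
      _ = pexpand p Hc * ((1 - X) ^ a * (invOneSubPow R a).val) := by ring
      _ = pexpand p Hc := by rw [one_sub_pow_mul_V, mul_one]
  have key4 : DA = pexpand p Hc * (invOneSubPow R 1).val := by
    calc DA = DA * ((1 - X) ^ 1 * (invOneSubPow R 1).val) := by
          rw [one_sub_pow_mul_V, mul_one]
      _ = (DA * (1 - X)) * (invOneSubPow R 1).val := by ring
      _ = pexpand p Hc * (invOneSubPow R 1).val := by rw [key3]
  -- final coefficient computation
  have hV1 : ∀ n : ℕ, PowerSeries.coeff n (invOneSubPow R 1).val = 1 := by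
    intro n
    rw [invOneSubPow_val_succ_eq_mk_add_choose, coeff_mk]
    simp
  have hbd : b = p * d := by rw [show b = m₂ * p ^ (s + 1) from rfl, pow_succ]; ring
  have final : PowerSeries.coeff b DA =
      PowerSeries.coeff d ((1 + X) ^ c * (invOneSubPow R (c + 1)).val) := by
    rw [key4, coeff_mul, Finset.Nat.sum_antidiagonal_eq_sum_range_succ_mk]
    have e2 : ∀ i ∈ range (b + 1),
        PowerSeries.coeff i (pexpand p Hc) * PowerSeries.coeff (b - i) (invOneSubPow R 1).val
          = if p ∣ i then PowerSeries.coeff (i / p) Hc else 0 := by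
      intro i _
      rw [hV1, mul_one, coeff_pexpand]
    rw [Finset.sum_congr rfl e2, hbd, sum_expand hp0 d (fun j => PowerSeries.coeff j Hc)]
    have e3 : (1 + X : R⟦X⟧) ^ c * (invOneSubPow R (c + 1)).val = Hc * (invOneSubPow R 1).val := by
      rw [V_succ_eq, hHc]; ring
    rw [e3, coeff_mul, Finset.Nat.sum_antidiagonal_eq_sum_range_succ_mk]
    refine Finset.sum_congr rfl fun j _ => ?_
    rw [hV1, mul_one]
  exact final
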